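/- Assume C_HN < C_HA and set δ = C_HA − C_HN + β·(V(λAA) − V(λNA)). If τ ∈ [0,1] is a threshold for V and T(τ) ≥ τ, then τ = (C_L/(1−β) − C_HN − β·V(λNA)) / δ. -/

import Mathlib

/-- Two-state consumer model: transition probabilities `lNA ≤ lAA`, costs
`CHN ≤ CL ≤ CHA`, discount factor `β ∈ (0,1)`. -/
structure CouponModel where
  lNA : ℝ
  lAA : ℝ
  CHN : ℝ
  CL : ℝ
  CHA : ℝ
  β : ℝ
  lNA_nonneg : 0 ≤ lNA
  lNA_le_lAA : lNA ≤ lAA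
  lAA_le_one : lAA ≤ 1
  CHN_le_CL : CHN ≤ CL
  CL_le_CHA : CL ≤ CHA
  β_pos : 0 < β
  β_lt_one : β < 1

namespace CouponModel

/-- Belief-update map `T(p) = (1-p)·λNA + p·λAA`. -/
noncomputable def T (M : CouponModel) (p : ℝ) : ℝ := (1 - p) * M.lNA + p * M.lAA

/-- Bellman operator. -/
noncomputable def B (M : CouponModel) (f : ℝ → ℝ) (p : ℝ) : ℝ :=
  min (M.CL + M.β * f (M.T p))
    ((1 - p) * M.CHN + p * M.CHA + M.β * ((1 - p) * f M.lNA + p * f M.lAA))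

/-- A function `f : ℝ → ℝ` is bounded on the belief space `[0,1]`. -/
def IsBdd (f : ℝ → ℝ) : Prop := ∃ C : ℝ, ∀ p ∈ Set.Icc (0:ℝ) 1, |f p| ≤ C

/-- `V` is a bounded fixed point of the Bellman operator on `[0,1]`. -/
def IsValue (M : CouponModel) (V : ℝ → ℝ) : Prop :=
  IsBdd V ∧ ∀ p ∈ Set.Icc (0:ℝ) 1, V p = M.B V p

/-- Value of offering the low-privacy coupon at belief `p`. -/
noncomputable def LPval (M : CouponModel) (V : ℝ → ℝ) (p : ℝ) : ℝ :=
  M.CL + M.β * V (M.T p)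

/-- Value of offering the high-privacy coupon at belief `p`. -/
noncomputable def HPval (M : CouponModel) (V : ℝ → ℝ) (p : ℝ) : ℝ :=
  (1 - p) * M.CHN + p * M.CHA + M.β * ((1 - p) * V M.lNA + p * V M.lAA)

/-- `τ` is a threshold for `V`: HP is optimal below `τ`, LP is optimal above `τ`. -/
def IsThreshold (M : CouponModel) (V : ℝ → ℝ) (τ : ℝ) : Prop :=
  τ ∈ Set.Icc (0:ℝ) 1 ∧
    (∀ p ∈ Set.Icc (0:ℝ) τ, V p = M.HPval V p) ∧
    (∀ p ∈ Set.Icc τ (1:ℝ), V p = M.LPval V p)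

end CouponModel

/-- If `τ` is a threshold for `V` and `T(τ) ≥ τ`, then
`τ = (C_L/(1-β) - C_HN - β·V(λNA)) / δ` where
`δ = C_HA - C_HN + β·(V(λAA) - V(λNA))`. -/
theorem threshold_formula_of_T_ge (M : CouponModel) (hC : M.CHN < M.CHA)
    (V : ℝ → ℝ) (hV : M.IsValue V)
    (τ : ℝ) (hτ : M.IsThreshold V τ) (hT : τ ≤ M.T τ) :
    τ = (M.CL / (1 - M.β) - M.CHN - M.β * V M.lNA)
      / (M.CHA - M.CHN + M.β * (V M.lAA - V M.lNA)) := by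
  obtain ⟨⟨C, hCbd⟩, hfix⟩ := hV
  obtain ⟨hτmem, hHP, hLP⟩ := hτ
  have hβ0 := M.β_pos
  have hβ1 := M.β_lt_one
  have h1β : (0:ℝ) < 1 - M.β := by linarith
  set c : ℝ := M.CL / (1 - M.β) with hcdef
  have hcfix : c = M.CL + M.β * c := by
    rw [hcdef]; linear_combination div_mul_cancel₀ M.CL (ne_of_gt h1β)
  have hτ0 : (0:ℝ) ≤ τ := hτmem.1
  have hτ1 : τ ≤ 1 := hτmem.2
  have hl0 := M.lNA_nonneg
  have hll := M.lNA_le_lAA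
  have hl1 := M.lAA_le_one
  -- T maps [0,1] into [0,1]
  have hTmem : ∀ p ∈ Set.Icc (0:ℝ) 1, M.T p ∈ Set.Icc (0:ℝ) 1 := by
    intro p hp
    obtain ⟨h0, h1⟩ := hp
    constructor
    · unfold CouponModel.T; nlinarith
    · unfold CouponModel.T; nlinarith
  -- T maps [τ,1] into [τ,1]
  have hTinv : ∀ p ∈ Set.Icc τ 1, M.T p ∈ Set.Icc τ 1 := by
    intro p hp
    obtain ⟨h1, h2⟩ := hp
    have hp01 : p ∈ Set.Icc (0:ℝ) 1 := ⟨le_trans hτ0 h1, h2⟩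
    have hT01 := hTmem p hp01
    refine ⟨?_, hT01.2⟩
    have hmono : M.T τ ≤ M.T p := by unfold CouponModel.T; nlinarith
    linarith
  set K : ℝ := C + |c| with hKdef
  have hK0 : 0 ≤ K := by
    have h0 : (0:ℝ) ∈ Set.Icc (0:ℝ) 1 := by constructor <;> norm_num
    have := hCbd 0 h0
    have := abs_nonneg (V 0)
    have := abs_nonneg c
    simp only [hKdef]; linarith
  -- upper bound on [0,1]
  have hA : ∀ n : ℕ, ∀ p ∈ Set.Icc (0:ℝ) 1, V p - c ≤ M.β ^ n * K := by
    intro n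
    induction n with
    | zero =>
      intro p hp
      have h1 := hCbd p hp
      have h2 : V p ≤ |V p| := le_abs_self _
      have h3 : -c ≤ |c| := neg_le_abs c
      simp only [pow_zero, one_mul, hKdef]; linarith
    | succ n ih =>
      intro p hp
      have hB := hfix p hp
      have hle : V p ≤ M.CL + M.β * V (M.T p) := by
        rw [hB]; exact min_le_left _ _
      have hTp := hTmem p hp
      have ihT := ih (M.T p) hTp
      have hstep : V p - c ≤ M.β * (V (M.T p) - c) := by
        have hr : M.β * (V (M.T p) - c) = M.β * V (M.T p) - M.β * c := by ring
        rw [hr]; linarith [hcfix]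
      calc V p - c ≤ M.β * (V (M.T p) - c) := hstep
        _ ≤ M.β * (M.β ^ n * K) := by
            apply mul_le_mul_of_nonneg_left ihT (le_of_lt hβ0)
        _ = M.β ^ (n + 1) * K := by ring
  -- equality on [τ,1]
  have hBabs : ∀ n : ℕ, ∀ p ∈ Set.Icc τ 1, |V p - c| ≤ M.β ^ n * K := by
    intro n
    induction n with
    | zero =>
      intro p hp
      have hp01 : p ∈ Set.Icc (0:ℝ) 1 := ⟨le_trans hτ0 hp.1, hp.2⟩
      have h1 := hCbd p hp01
      have := abs_sub (V p) c
      simp only [pow_zero, one_mul, hKdef]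
      calc |V p - c| ≤ |V p| + |c| := abs_sub _ _
        _ ≤ C + |c| := by linarith
    | succ n ih =>
      intro p hp
      have heq : V p = M.CL + M.β * V (M.T p) := hLP p hp
      have hTp := hTinv p hp
      have ihT := ih (M.T p) hTp
      have h1 : V p - c = M.β * (V (M.T p) - c) := by
        linear_combination heq - hcfix
      rw [h1, abs_mul, abs_of_pos hβ0]
      calc M.β * |V (M.T p) - c| ≤ M.β * (M.β ^ n * K) :=
            mul_le_mul_of_nonneg_left ihT (le_of_lt hβ0)
        _ = M.β ^ (n + 1) * K := by ring
  have htends : Filter.Tendsto (fun n : ℕ => M.β ^ n * K) Filter.atTop (nhds 0) := by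
    have h := tendsto_pow_atTop_nhds_zero_of_lt_one (le_of_lt hβ0) hβ1
    have := h.mul_const K
    simpa using this
  have hVle : ∀ p ∈ Set.Icc (0:ℝ) 1, V p ≤ c := by
    intro p hp
    have : V p - c ≤ 0 := ge_of_tendsto' htends (fun n => hA n p hp)
    linarith
  have hVeq : ∀ p ∈ Set.Icc τ 1, V p = c := by
    intro p hp
    have h1 : |V p - c| ≤ 0 := ge_of_tendsto' htends (fun n => hBabs n p hp)
    have h2 : |V p - c| = 0 := le_antisymm h1 (abs_nonneg _)
    have := abs_eq_zero.mp h2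
    linarith
  have hVτ : V τ = c := hVeq τ ⟨le_refl _, hτ1⟩
  have hτAA : τ ≤ M.lAA := by
    have : M.T τ ≤ M.lAA := by unfold CouponModel.T; nlinarith
    linarith
  have hVAA : V M.lAA = c := hVeq M.lAA ⟨hτAA, hl1⟩
  have hVNA : V M.lNA ≤ c := hVle M.lNA ⟨hl0, le_trans hll hl1⟩
  have hHPτ : V τ = M.HPval V τ := hHP τ ⟨hτ0, le_refl _⟩
  unfold CouponModel.HPval at hHPτ
  rw [hVτ, hVAA] at hHPτ
  have hδ : M.CHA - M.CHN + M.β * (V M.lAA - V M.lNA) > 0 := by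
    rw [hVAA]; nlinarith
  rw [eq_div_iff (ne_of_gt hδ), hVAA]
  linear_combination -hHPτ
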